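/- Let q ≥ 1, n ≥ 1, k ≥ 2, and let f, g be formal power series in q variables over ℝ with ord g = m ∈ ℕ and g^n = f. Then for every multi-index c with |c| = m·n + k, one has f_c = G + n · Σ_b g_b · (Σ ∏_{i=1}^{n-1} g_{c^i}), where G = Σ ∏_{i=1}^n g_{c^i} summed over all n-tuples (c^1, …, c^n) of multi-indices with m ≤ |c^i| ≤ m+k−1 for every i and c^1 + … + c^n = c; the outer sum in the second term extends over all multi-indices b with |b| = m+k and b ≤ c componentwise; and the inner sum extends over all (n−1)-tuples (c^1, …, c^{n-1}) with |c^i| = m for every i and c^1 + … + c^{n-1} = c − b. -/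

import Mathlib

open Finset MvPowerSeries

private lemma aux_all_eq {α : Type*} {s : Finset α} {f : α → ℕ} {m : ℕ}
    (h1 : ∀ i ∈ s, m ≤ f i) (h2 : ∑ i ∈ s, f i = m * s.card) :
    ∀ i ∈ s, f i = m := by
  by_contra h
  push_neg at h
  obtain ⟨i, hi, hne⟩ := h
  have hlt : m < f i := lt_of_le_of_ne (h1 i hi) (Ne.symm hne)
  have h3 : ∑ _j ∈ s, m < ∑ j ∈ s, f j := Finset.sum_lt_sum h1 ⟨i, hi, hlt⟩
  rw [Finset.sum_const, smul_eq_mul, h2, mul_comm] at h3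
  exact lt_irrefl _ h3

private lemma degree_finset_sum {ι σ : Type*} (s : Finset ι) (f : ι → (σ →₀ ℕ)) :
    (∑ i ∈ s, f i).degree = ∑ i ∈ s, (f i).degree := by
  simp only [Finsupp.degree_eq_weight_one]
  exact map_sum _ _ _

theorem coeff_order_add_eq {q n m k : ℕ} (hq : 1 ≤ q) (hn : 1 ≤ n) (hk : 2 ≤ k)
    (f g : MvPowerSeries (Fin q) ℝ)
    (hord : g.order = (m : ℕ∞)) (hgf : g ^ n = f) :
    ∀ c : Fin q →₀ ℕ, c.degree = m * n + k →
      MvPowerSeries.coeff c f =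
        (∑ᶠ (d : Fin n → (Fin q →₀ ℕ))
          (_ : (∀ i, m ≤ (d i).degree ∧ (d i).degree ≤ m + k - 1) ∧ ∑ i, d i = c),
          ∏ i, MvPowerSeries.coeff (d i) g)
        + (n : ℝ) * ∑ᶠ (b : Fin q →₀ ℕ) (_ : b.degree = m + k ∧ b ≤ c),
            MvPowerSeries.coeff b g *
              ∑ᶠ (d : Fin (n - 1) → (Fin q →₀ ℕ))
                (_ : (∀ i, (d i).degree = m) ∧ ∑ i, d i = c - b),
                ∏ i, MvPowerSeries.coeff (d i) g := by
  classical
  intro c hc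
  obtain ⟨n', rfl⟩ : ∃ n', n = n' + 1 := ⟨n - 1, (Nat.succ_pred_eq_of_pos hn).symm⟩
  -- the coefficient as a sum over the antidiagonal
  have hlow : ∀ e : Fin q →₀ ℕ, e.degree < m → MvPowerSeries.coeff e g = 0 := by
    intro e he
    exact MvPowerSeries.coeff_of_lt_order (by rw [hord]; exact_mod_cast he)
  set F : (Fin (n'+1) → (Fin q →₀ ℕ)) → ℝ := fun d => ∏ i, MvPowerSeries.coeff (d i) g
    with hF
  set A : Finset (Fin (n'+1) → (Fin q →₀ ℕ)) := Finset.finAntidiagonal (n'+1) c with hA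
  set A₁ : Finset (Fin (n'+1) → (Fin q →₀ ℕ)) :=
    A.filter (fun d => ∀ i, m ≤ (d i).degree ∧ (d i).degree ≤ m + k - 1) with hA₁
  set A₂ : Finset (Fin (n'+1) → (Fin q →₀ ℕ)) :=
    A.filter (fun d => (∀ i, m ≤ (d i).degree) ∧ ∃ i, (d i).degree = m + k) with hA₂
  set Bset : Finset (Fin q →₀ ℕ) := (Finset.Iic c).filter (fun b => b.degree = m + k)
    with hBset
  set Eset : (Fin q →₀ ℕ) → Finset (Fin n' → (Fin q →₀ ℕ)) :=
    fun b => (Finset.finAntidiagonal n' (c - b)).filter (fun e => ∀ i, (e i).degree = m)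
    with hEset
  have hfin : MvPowerSeries.coeff c f = ∑ d ∈ A, F d := by
    have hpow : MvPowerSeries.coeff c f
        = ∑ l ∈ Finset.finsuppAntidiag (Finset.univ : Finset (Fin (n'+1))) c,
            ∏ i, MvPowerSeries.coeff (l i) g := by
      rw [← hgf]
      have h1 : g ^ (n'+1) = ∏ _i : Fin (n'+1), g := by simp
      rw [h1, MvPowerSeries.coeff_prod]
    rw [hpow]
    apply Finset.sum_nbij' (i := fun (l : Fin (n'+1) →₀ Fin q →₀ ℕ) => ⇑l)
      (j := fun d => Finsupp.equivFunOnFinite.symm d)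
    · intro l hl
      simp only [Finset.mem_finsuppAntidiag] at hl
      simp [hA, Finset.mem_finAntidiagonal, ← hl.1, Finsupp.sum_fintype]
    · intro d hd
      simp only [hA, Finset.mem_finAntidiagonal] at hd
      simp [Finset.mem_finsuppAntidiag, ← hd]
    · intro l _; simp
    · intro d _; rfl
    · intro l _; rfl
  -- degrees sum to m(n'+1)+k on the antidiagonal
  have hdegsum : ∀ d ∈ A, ∑ i, (d i).degree = m * (n'+1) + k := by
    intro d hd
    rw [hA, Finset.mem_finAntidiagonal] at hd
    rw [← degree_finset_sum, hd, hc]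
  -- if one entry has degree m+k, all others have degree m
  have hothers : ∀ d ∈ A, (∀ j, m ≤ (d j).degree) → ∀ i, (d i).degree = m + k →
      ∀ j, j ≠ i → (d j).degree = m := by
    intro d hd hall i hi j hj
    have hsum := hdegsum d hd
    have h4 : ∑ l ∈ Finset.univ.erase i, (d l).degree + (d i).degree
        = ∑ l, (d l).degree := Finset.sum_erase_add Finset.univ _ (Finset.mem_univ i)
    have hmul : m * (n'+1) + k = m * n' + (m + k) := by ring
    have herase : ∑ l ∈ Finset.univ.erase i, (d l).degree = m * n' := by omega
    have hcard : (Finset.univ.erase i).card = n' := by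
      simp [Finset.card_erase_of_mem]
    exact aux_all_eq (fun l _ => hall l) (by rw [herase, hcard]) j
      (Finset.mem_erase.mpr ⟨hj, Finset.mem_univ j⟩)
  -- splitting the sum
  have hsplit : ∑ d ∈ A, F d = ∑ d ∈ A₁, F d + ∑ d ∈ A₂, F d := by
    rw [← Finset.sum_filter_add_sum_filter_not A
      (fun d => ∀ i, m ≤ (d i).degree ∧ (d i).degree ≤ m + k - 1), ← hA₁]
    congr 1
    symm
    apply Finset.sum_subset
    · intro d hd
      rw [hA₂, Finset.mem_filter] at hd
      obtain ⟨hdA, hall, i, hi⟩ := hd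
      refine Finset.mem_filter.mpr ⟨hdA, ?_⟩
      intro hp
      have := (hp i).2
      omega
    · intro d hd hd2
      rw [Finset.mem_filter] at hd
      obtain ⟨hdA, hnp⟩ := hd
      by_cases hall : ∀ j, m ≤ (d j).degree
      · exfalso
        apply hd2
        rw [hA₂, Finset.mem_filter]
        refine ⟨hdA, hall, ?_⟩
        push_neg at hnp
        obtain ⟨i, hi⟩ := hnp
        have hge : m + k ≤ (d i).degree := by
          have := hi (hall i)
          omega
        refine ⟨i, ?_⟩
        -- upper bound: degree (d i) ≤ m + k
        have hsum := hdegsum d hdA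
        have h4 : ∑ l ∈ Finset.univ.erase i, (d l).degree + (d i).degree
            = ∑ l, (d l).degree := Finset.sum_erase_add Finset.univ _ (Finset.mem_univ i)
        have hlb : m * n' ≤ ∑ l ∈ Finset.univ.erase i, (d l).degree := by
          have hcard : (Finset.univ.erase i).card = n' := by
            simp [Finset.card_erase_of_mem]
          calc m * n' = ∑ _l ∈ Finset.univ.erase i, m := by
                rw [Finset.sum_const, hcard, smul_eq_mul, mul_comm]
            _ ≤ _ := Finset.sum_le_sum (fun l _ => hall l)
        have hmul : m * (n'+1) + k = m * n' + (m + k) := by ring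
        omega
      · push_neg at hall
        obtain ⟨i, hi⟩ := hall
        exact Finset.prod_eq_zero (Finset.mem_univ i) (hlow _ (by omega))
  -- the second sum as a multiple
  have hsecond : ∑ d ∈ A₂, F d = ((n' : ℝ) + 1) *
      ∑ b ∈ Bset, MvPowerSeries.coeff b g *
        ∑ e ∈ Eset b, ∏ i, MvPowerSeries.coeff (e i) g := by
    set B : Fin (n'+1) → Finset (Fin (n'+1) → (Fin q →₀ ℕ)) :=
      fun i => A₂.filter (fun d => (d i).degree = m + k) with hB'
    have hmemA : ∀ d ∈ A₂, d ∈ A := fun d hd => (Finset.mem_filter.mp hd).1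
    have hcover : A₂ = Finset.univ.biUnion B := by
      ext d
      simp only [Finset.mem_biUnion, Finset.mem_univ, true_and, hB', Finset.mem_filter]
      constructor
      · intro hd
        obtain ⟨-, -, i, hi⟩ := Finset.mem_filter.mp hd
        exact ⟨i, hd, hi⟩
      · rintro ⟨i, hd, -⟩; exact hd
    have hdisj : ((Finset.univ : Finset (Fin (n'+1))) : Set (Fin (n'+1))).PairwiseDisjoint B := by
      intro i _ j _ hij
      apply Finset.disjoint_left.mpr
      intro d hdi hdj
      rw [hB', Finset.mem_filter] at hdi hdj
      obtain ⟨hd2, hi⟩ := hdi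
      obtain ⟨-, hj⟩ := hdj
      rw [hA₂, Finset.mem_filter] at hd2
      have := hothers d hd2.1 hd2.2.1 i hi j (fun h => hij h.symm)
      omega
    have hswap : ∀ i, ∑ d ∈ B i, F d = ∑ d ∈ B 0, F d := by
      intro i
      have hmemswap : ∀ i₁ i₂ : Fin (n'+1), ∀ d ∈ B i₁,
          d ∘ (Equiv.swap i₁ i₂) ∈ B i₂ := by
        intro i₁ i₂ d hd
        rw [hB', Finset.mem_filter, hA₂, Finset.mem_filter, hA,
          Finset.mem_finAntidiagonal] at hd ⊢
        obtain ⟨⟨hsum, hall, i₀, hi₀⟩, hi⟩ := hd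
        refine ⟨⟨(Equiv.sum_comp (Equiv.swap i₁ i₂) d).trans hsum, fun j => hall _,
          ⟨Equiv.swap i₁ i₂ i₀, ?_⟩⟩, ?_⟩
        · rw [Function.comp_apply, Equiv.swap_apply_self]; exact hi₀
        · rw [Function.comp_apply, Equiv.swap_apply_right]; exact hi
      apply Finset.sum_nbij' (i := fun d => d ∘ Equiv.swap i 0)
        (j := fun d => d ∘ Equiv.swap i 0)
      · intro d hd; exact hmemswap i 0 d hd
      · intro d hd
        have := hmemswap 0 i d hd
        rwa [Equiv.swap_comm] at this
      · intro d _; funext x; simp [Equiv.swap_apply_self]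
      · intro d _; funext x; simp [Equiv.swap_apply_self]
      · intro d _
        exact (Equiv.prod_comp (Equiv.swap i 0) (fun j => MvPowerSeries.coeff (d j) g)).symm
    have hB0 : ∑ d ∈ B 0, F d = ∑ b ∈ Bset, MvPowerSeries.coeff b g *
        ∑ e ∈ Eset b, ∏ i, MvPowerSeries.coeff (e i) g := by
      rw [show (∑ b ∈ Bset, MvPowerSeries.coeff b g *
            ∑ e ∈ Eset b, ∏ i, MvPowerSeries.coeff (e i) g)
          = ∑ p ∈ Bset.sigma Eset, MvPowerSeries.coeff p.1 g *
              ∏ i, MvPowerSeries.coeff (p.2 i) g by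
        rw [Finset.sum_sigma]
        exact Finset.sum_congr rfl fun b _ => Finset.mul_sum _ _ _]
      apply Finset.sum_nbij'
        (i := fun d => (⟨d 0, Fin.tail d⟩ : Σ _ : (Fin q →₀ ℕ), Fin n' → (Fin q →₀ ℕ)))
        (j := fun p => Fin.cons p.1 p.2)
      · intro d hd
        rw [hB', Finset.mem_filter, hA₂, Finset.mem_filter, hA,
          Finset.mem_finAntidiagonal] at hd
        obtain ⟨⟨hsum, hall, -⟩, h0⟩ := hd
        have hdA : d ∈ A := by rw [hA, Finset.mem_finAntidiagonal]; exact hsum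
        have hsum' : d 0 + ∑ i : Fin n', d i.succ = c := by
          rw [← Fin.sum_univ_succ]; exact hsum
        refine Finset.mem_sigma.mpr ⟨Finset.mem_filter.mpr ⟨Finset.mem_Iic.mpr ?_, h0⟩,
          Finset.mem_filter.mpr ⟨Finset.mem_finAntidiagonal.mpr ?_, ?_⟩⟩
        · rw [← hsum]
          exact Finset.single_le_sum (f := d) (fun i _ => zero_le) (Finset.mem_univ 0)
        · have htail : ∑ i : Fin n', Fin.tail d i = ∑ i : Fin n', d i.succ := rfl
          rw [htail, ← hsum', add_tsub_cancel_left]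
        · exact fun i => hothers d hdA hall 0 h0 i.succ (Fin.succ_ne_zero i)
      · intro p hp
        obtain ⟨hb, he⟩ := Finset.mem_sigma.mp hp
        rw [hBset, Finset.mem_filter, Finset.mem_Iic] at hb
        rw [hEset, Finset.mem_filter, Finset.mem_finAntidiagonal] at he
        obtain ⟨hble, hdeg⟩ := hb
        obtain ⟨hesum, hedeg⟩ := he
        have hcsum : ∑ i, Fin.cons p.1 p.2 i = c := by
          rw [Fin.sum_univ_succ]
          simp only [Fin.cons_zero, Fin.cons_succ]
          rw [hesum, add_tsub_cancel_of_le hble]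
        rw [hB', Finset.mem_filter, hA₂, Finset.mem_filter, hA,
          Finset.mem_finAntidiagonal]
        refine ⟨⟨hcsum, ?_, ⟨0, by simp [hdeg]⟩⟩, by simp [hdeg]⟩
        intro j
        induction j using Fin.cases with
        | zero => simp only [Fin.cons_zero, hdeg]; omega
        | succ i => simp [Fin.cons_succ, hedeg i]
      · intro d _; exact Fin.cons_self_tail d
      · intro p _; simp
      · intro d _
        exact Fin.prod_univ_succ _
    calc ∑ d ∈ A₂, F d = ∑ i, ∑ d ∈ B i, F d := by
          rw [hcover, Finset.sum_biUnion hdisj]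
      _ = ∑ _i : Fin (n'+1), ∑ d ∈ B 0, F d := Finset.sum_congr rfl (fun i _ => hswap i)
      _ = ((n' : ℝ) + 1) * ∑ d ∈ B 0, F d := by
          rw [Finset.sum_const, Finset.card_univ, Fintype.card_fin, nsmul_eq_mul]
          push_cast; ring
      _ = _ := by rw [hB0]
  -- rewriting the finsums on the RHS as finset sums
  have hG : (∑ᶠ (d : Fin (n'+1) → (Fin q →₀ ℕ))
      (_ : (∀ i, m ≤ (d i).degree ∧ (d i).degree ≤ m + k - 1) ∧ ∑ i, d i = c),
      ∏ i, MvPowerSeries.coeff (d i) g) = ∑ d ∈ A₁, F d := by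
    apply finsum_cond_eq_sum_of_cond_iff
    intro d _
    simp only [hA₁, hA, Finset.mem_filter, Finset.mem_finAntidiagonal]
    tauto
  have hE : ∀ b : Fin q →₀ ℕ,
      (∑ᶠ (e : Fin n' → (Fin q →₀ ℕ)) (_ : (∀ i, (e i).degree = m) ∧ ∑ i, e i = c - b),
        ∏ i, MvPowerSeries.coeff (e i) g)
      = ∑ e ∈ Eset b, ∏ i, MvPowerSeries.coeff (e i) g := by
    intro b
    apply finsum_cond_eq_sum_of_cond_iff
    intro e _
    simp only [hEset, Finset.mem_filter, Finset.mem_finAntidiagonal]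
    tauto
  have hB : (∑ᶠ (b : Fin q →₀ ℕ) (_ : b.degree = m + k ∧ b ≤ c),
      MvPowerSeries.coeff b g * ∑ e ∈ Eset b, ∏ i, MvPowerSeries.coeff (e i) g)
      = ∑ b ∈ Bset, MvPowerSeries.coeff b g *
          ∑ e ∈ Eset b, ∏ i, MvPowerSeries.coeff (e i) g := by
    apply finsum_cond_eq_sum_of_cond_iff
    intro b _
    simp only [hBset, Finset.mem_filter, Finset.mem_Iic]
    tauto
  show MvPowerSeries.coeff c f =
        (∑ᶠ (d : Fin (n'+1) → (Fin q →₀ ℕ))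
          (_ : (∀ i, m ≤ (d i).degree ∧ (d i).degree ≤ m + k - 1) ∧ ∑ i, d i = c),
          ∏ i, MvPowerSeries.coeff (d i) g)
        + ((n'+1 : ℕ) : ℝ) * ∑ᶠ (b : Fin q →₀ ℕ) (_ : b.degree = m + k ∧ b ≤ c),
            MvPowerSeries.coeff b g *
              ∑ᶠ (d : Fin n' → (Fin q →₀ ℕ))
                (_ : (∀ i, (d i).degree = m) ∧ ∑ i, d i = c - b),
                ∏ i, MvPowerSeries.coeff (d i) g
  simp only [hE, hB, hG]
  rw [hfin, hsplit, hsecond]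
  push_cast
  ring
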